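/- Correspondence between uncertainty-map semantics and the two-dimensional ETS semantics: for any Kripke model M (without uncertainty set), nonempty subsets Γ, Δ of its states, states s ∈ Γ, t ∈ Δ, every EPDL program π and formula φ: (i) (M^Γ, s) ⟦π⟧ (M^Δ, t) if and only if s_Γ →_π t_Δ in the ETS model M^•; and (ii) M^Γ, s ⊨ φ if and only if M^•, s_Γ ⊩ φ. -/
import Mathlib


mutual
/-- Formulas of EPDL. -/
inductive EForm (P A : Type) : Type
  | top : EForm P A
  | atom : P → EForm P A
  | neg : EForm P A → EForm P A
  | and : EForm P A → EForm P A → EForm P A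
  | box : EProg P A → EForm P A → EForm P A
  | know : EForm P A → EForm P A
/-- Programs of EPDL. -/
inductive EProg (P A : Type) : Type
  | act : A → EProg P A
  | test : EForm P A → EProg P A
  | seq : EProg P A → EProg P A → EProg P A
  | choice : EProg P A → EProg P A → EProg P A
  | star : EProg P A → EProg P A
end

namespace EForm
variable {P A : Type}
/-- φ ∨ ψ := ¬(¬φ ∧ ¬ψ) -/
def or (φ ψ : EForm P A) : EForm P A := neg (and (neg φ) (neg ψ))
/-- φ → ψ := ¬φ ∨ ψ -/
def imp (φ ψ : EForm P A) : EForm P A := or (neg φ) ψ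
def iff (φ ψ : EForm P A) : EForm P A := and (imp φ ψ) (imp ψ φ)
/-- ⟨π⟩φ := ¬[π]¬φ -/
def dia (π : EProg P A) (φ : EForm P A) : EForm P A := neg (box π (neg φ))
/-- ⦗π⦘φ := [π]φ ∧ ⟨π⟩φ -/
def bbox (π : EProg P A) (φ : EForm P A) : EForm P A := and (box π φ) (dia π φ)
/-- K̂φ := ¬K¬φ -/
def hatK (φ : EForm P A) : EForm P A := neg (know (neg φ))
end EForm

/-- A Kripke model with labelled relations. -/
structure Kripke (P A : Type) where
  S : Type
  R : A → S → S → Prop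
  V : S → P → Prop

namespace Kripke
variable {P A : Type}
/-- U|^a -/
def img (N : Kripke P A) (a : A) (U : Set N.S) : Set N.S := {t | ∃ u ∈ U, N.R a u t}
/-- Iterated update U|^σ along a sequence of actions. -/
def updU (N : Kripke P A) : Set N.S → List A → Set N.S
  | U, [] => U
  | U, a :: σ => N.updU (N.img a U) σ
end Kripke

mutual
/-- Truth of an EPDL formula at a pointed uncertainty map, represented by the
(fixed) Kripke model `N`, an uncertainty set `U` and a state `s`. -/
def eSat {P A : Type} (N : Kripke P A) : Set N.S → N.S → EForm P A → Prop
  | _, _, .top => True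
  | _, s, .atom p => N.V s p
  | U, s, .neg φ => ¬ eSat N U s φ
  | U, s, .and φ ψ => eSat N U s φ ∧ eSat N U s ψ
  | U, s, .box π φ => ∀ c : Set N.S × N.S, eRel N π (U, s) c → eSat N c.1 c.2 φ
  | U, _, .know φ => ∀ u ∈ U, eSat N U u φ
/-- The relation ⟦π⟧ between pointed uncertainty maps (over a fixed Kripke model
`N`, a pointed uncertainty map is a pair of an uncertainty set and a state). -/
def eRel {P A : Type} (N : Kripke P A) : EProg P A → Set N.S × N.S → Set N.S × N.S → Prop
  | .act a, c, c' => c'.1 = N.img a c.1 ∧ N.R a c.2 c'.2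
  | .test ψ, c, c' => c' = c ∧ eSat N c.1 c.2 ψ
  | .seq π₁ π₂, c, c' => ∃ d, eRel N π₁ c d ∧ eRel N π₂ d c'
  | .choice π₁ π₂, c, c' => eRel N π₁ c c' ∨ eRel N π₂ c c'
  | .star π, c, c' => Relation.ReflTransGen (fun x y => eRel N π x y) c c'
end

/-- Validity: truth at every pointed uncertainty map. -/
def eValid {P A : Type} (φ : EForm P A) : Prop :=
  ∀ (N : Kripke P A) (U : Set N.S), U.Nonempty → ∀ s ∈ U, eSat N U s φ

/-- An epistemic temporal structure: a Kripke model with both action relations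
and an epistemic equivalence relation. -/
structure ETS (P A : Type) where
  S : Type
  R : A → S → S → Prop
  E : S → S → Prop
  equiv : Equivalence E
  V : S → P → Prop

mutual
/-- ETS semantics for EPDL formulas. -/
def etsSat {P A : Type} (M : ETS P A) : M.S → EForm P A → Prop
  | _, .top => True
  | s, .atom p => M.V s p
  | s, .neg φ => ¬ etsSat M s φ
  | s, .and φ ψ => etsSat M s φ ∧ etsSat M s ψ
  | s, .box π φ => ∀ t, etsRel M π s t → etsSat M t φ
  | s, .know φ => ∀ u, M.E s u → etsSat M u φ
/-- ETS interpretation of EPDL programs as relations on states. -/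
def etsRel {P A : Type} (M : ETS P A) : EProg P A → M.S → M.S → Prop
  | .act a, s, t => M.R a s t
  | .test ψ, s, t => s = t ∧ etsSat M s ψ
  | .seq π₁ π₂, s, t => ∃ u, etsRel M π₁ s u ∧ etsRel M π₂ u t
  | .choice π₁ π₂, s, t => etsRel M π₁ s t ∨ etsRel M π₂ s t
  | .star π, s, t => Relation.ReflTransGen (fun x y => etsRel M π x y) s t
end

/-- The ETS model M^• built from a Kripke model: states are pairs s_Γ with
s ∈ Γ, R^•_a relates s_Γ to t_Δ iff s R_a t and Δ = Γ|^a, and s_Γ ∼ t_Δ iff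
Γ = Δ. -/
def Kripke.bullet {P A : Type} (N : Kripke P A) : ETS P A where
  S := {p : N.S × Set N.S // p.1 ∈ p.2}
  R := fun a x y => N.R a x.val.1 y.val.1 ∧ y.val.2 = N.img a x.val.2
  E := fun x y => x.val.2 = y.val.2
  equiv := ⟨fun _ => rfl, fun h => h.symm, fun h₁ h₂ => h₁.trans h₂⟩
  V := fun x p => N.V x.val.1 p

theorem relMem {P A : Type} (N : Kripke P A) (π : EProg P A) :
    ∀ (c c' : Set N.S × N.S), eRel N π c c' → c.2 ∈ c.1 → c'.2 ∈ c'.1 := by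
  cases π with
  | act a =>
    rintro c c' ⟨h1, h2⟩ hm
    rw [show c'.1 = N.img a c.1 from h1]
    exact ⟨c.2, hm, h2⟩
  | test ψ =>
    rintro c c' ⟨rfl, -⟩ hm
    exact hm
  | seq π₁ π₂ =>
    rintro c c' ⟨d, h1, h2⟩ hm
    exact relMem N π₂ d c' h2 (relMem N π₁ c d h1 hm)
  | choice π₁ π₂ =>
    rintro c c' (h | h) hm
    · exact relMem N π₁ c c' h hm
    · exact relMem N π₂ c c' h hm
  | star π =>
    intro c c' h
    simp only [eRel] at h
    induction h with
    | refl => exact id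
    | tail h1 h2 ih2 => intro hm; exact relMem N π _ _ h2 (ih2 hm)
termination_by sizeOf π

mutual
theorem corrRel {P A : Type} (N : Kripke P A) (π : EProg P A) (Γ Δ : Set N.S)
    (s t : N.S) (hs : s ∈ Γ) (ht : t ∈ Δ) :
    eRel N π (Γ, s) (Δ, t) ↔ etsRel N.bullet π ⟨(s, Γ), hs⟩ ⟨(t, Δ), ht⟩ := by
  cases π with
  | act a =>
    simp only [eRel, etsRel]
    constructor
    · rintro ⟨h1, h2⟩; exact ⟨h2, h1⟩
    · rintro ⟨h1, h2⟩; exact ⟨h2, h1⟩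
  | test ψ =>
    simp only [eRel, etsRel]
    constructor
    · rintro ⟨h, hsat⟩
      have h1 : Δ = Γ := congrArg Prod.fst h
      have h2 : t = s := congrArg Prod.snd h
      subst h1; subst h2
      exact ⟨rfl, (corrSat N ψ _ _ _).mp hsat⟩
    · rintro ⟨h, hsat⟩
      have h1 : (s, Γ) = (t, Δ) := congrArg Subtype.val h
      have h2 : s = t := congrArg Prod.fst h1
      have h3 : Γ = Δ := congrArg Prod.snd h1
      subst h2; subst h3
      exact ⟨rfl, (corrSat N ψ _ _ _).mpr hsat⟩
  | seq π₁ π₂ =>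
    simp only [eRel, etsRel]
    constructor
    · rintro ⟨d, h1, h2⟩
      have hd : d.2 ∈ d.1 := relMem N π₁ _ _ h1 hs
      refine ⟨⟨(d.2, d.1), hd⟩, ?_, ?_⟩
      · exact (corrRel N π₁ Γ d.1 s d.2 hs hd).mp h1
      · exact (corrRel N π₂ d.1 Δ d.2 t hd ht).mp h2
    · rintro ⟨u, h1, h2⟩
      refine ⟨(u.val.2, u.val.1), ?_, ?_⟩
      · exact (corrRel N π₁ Γ u.val.2 s u.val.1 hs u.2).mpr h1
      · exact (corrRel N π₂ u.val.2 Δ u.val.1 t u.2 ht).mpr h2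
  | choice π₁ π₂ =>
    simp only [eRel, etsRel]
    constructor
    · rintro (h | h)
      · exact Or.inl ((corrRel N π₁ Γ Δ s t hs ht).mp h)
      · exact Or.inr ((corrRel N π₂ Γ Δ s t hs ht).mp h)
    · rintro (h | h)
      · exact Or.inl ((corrRel N π₁ Γ Δ s t hs ht).mpr h)
      · exact Or.inr ((corrRel N π₂ Γ Δ s t hs ht).mpr h)
  | star π =>
    simp only [eRel, etsRel]
    constructor
    · intro h
      have key : ∀ c c' : Set N.S × N.S, Relation.ReflTransGen (fun x y => eRel N π x y) c c' →
          ∀ (hc : c.2 ∈ c.1) (hc' : c'.2 ∈ c'.1),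
          Relation.ReflTransGen (fun x y => etsRel N.bullet π x y)
            ⟨(c.2, c.1), hc⟩ ⟨(c'.2, c'.1), hc'⟩ := by
        intro c c' h
        induction h with
        | refl => intro hc hc'; exact Relation.ReflTransGen.refl
        | @tail b d hab hbd ih =>
          intro hc hc'
          have hb : b.2 ∈ b.1 := relMem N (EProg.star π) c b (by simpa [eRel] using hab) hc
          exact (ih hc hb).tail ((corrRel N π b.1 d.1 b.2 d.2 hb hc').mp hbd)
      exact key (Γ, s) (Δ, t) h hs ht
    · intro h
      have key : ∀ x y : N.bullet.S, Relation.ReflTransGen (fun x y => etsRel N.bullet π x y) x y →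
          Relation.ReflTransGen (fun x y => eRel N π x y)
            (x.val.2, x.val.1) (y.val.2, y.val.1) := by
        intro x y h
        induction h with
        | refl => exact Relation.ReflTransGen.refl
        | @tail b d hab hbd ih =>
          exact ih.tail ((corrRel N π b.val.2 d.val.2 b.val.1 d.val.1 b.2 d.2).mpr hbd)
      exact key _ _ h
termination_by sizeOf π

theorem corrSat {P A : Type} (N : Kripke P A) (φ : EForm P A) (Γ : Set N.S)
    (s : N.S) (hs : s ∈ Γ) :
    eSat N Γ s φ ↔ etsSat N.bullet ⟨(s, Γ), hs⟩ φ := by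
  cases φ with
  | top => simp [eSat, etsSat]
  | atom p => simp [eSat, etsSat, Kripke.bullet]
  | neg φ =>
    simp only [eSat, etsSat]
    exact not_congr (corrSat N φ Γ s hs)
  | and φ ψ =>
    simp only [eSat, etsSat]
    exact and_congr (corrSat N φ Γ s hs) (corrSat N ψ Γ s hs)
  | box π φ =>
    simp only [eSat, etsSat]
    constructor
    · intro h y hy
      have hr : eRel N π (Γ, s) (y.val.2, y.val.1) :=
        (corrRel N π Γ y.val.2 s y.val.1 hs y.2).mpr hy
      exact (corrSat N φ y.val.2 y.val.1 y.2).mp (h (y.val.2, y.val.1) hr)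
    · intro h c hc
      have hm : c.2 ∈ c.1 := relMem N π _ _ hc hs
      exact (corrSat N φ c.1 c.2 hm).mpr
        (h ⟨(c.2, c.1), hm⟩ ((corrRel N π Γ c.1 s c.2 hs hm).mp hc))
  | know φ =>
    simp only [eSat, etsSat]
    constructor
    · intro h y hy
      have hy2 : y.val.2 = Γ := hy.symm
      have hm : y.val.1 ∈ Γ := hy2 ▸ y.2
      have := (corrSat N φ Γ y.val.1 hm).mp (h y.val.1 hm)
      have hey : y = (⟨(y.val.1, Γ), hm⟩ : N.bullet.S) := Subtype.ext (Prod.ext rfl hy2)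
      rw [hey]
      exact this
    · intro h u hu
      exact (corrSat N φ Γ u hu).mpr (h ⟨(u, Γ), hu⟩ rfl)
termination_by sizeOf φ
end

/-- Correspondence between the uncertainty-map semantics and the
two-dimensional ETS semantics: for any Kripke model N, nonempty subsets Γ, Δ of
its states, states s ∈ Γ, t ∈ Δ, every EPDL program π and formula φ:
(i) (N^Γ, s) ⟦π⟧ (N^Δ, t) iff s_Γ →_π t_Δ in the ETS model N^•; and
(ii) N^Γ, s ⊨ φ iff N^•, s_Γ ⊩ φ. -/
theorem ets_correspondence {P A : Type} [Countable P] [Countable A] (N : Kripke P A) :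
    (∀ (π : EProg P A) (Γ Δ : Set N.S) (s t : N.S) (hs : s ∈ Γ) (ht : t ∈ Δ),
        eRel N π (Γ, s) (Δ, t) ↔ etsRel N.bullet π ⟨(s, Γ), hs⟩ ⟨(t, Δ), ht⟩) ∧
    (∀ (φ : EForm P A) (Γ : Set N.S) (s : N.S) (hs : s ∈ Γ),
        eSat N Γ s φ ↔ etsSat N.bullet ⟨(s, Γ), hs⟩ φ) := by
  exact ⟨fun π Γ Δ s t hs ht => corrRel N π Γ Δ s t hs ht,
    fun φ Γ s hs => corrSat N φ Γ s hs⟩
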